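/- Let a₁, a₂, a₃, b₂, b₃, δ, θ, θ₃ > 0 satisfy 2a₃θ₃ > b₃² and 2a₂ > θ₃, and define θ₁ = δ²θ₃/(2a₃θ₃ − b₃²) and θ₂ = b₂²/(2a₂ − θ₃), both positive. Let b_{i,1}, b_{j,1}∈ℝ and b̃ = max(|b_{i,1}−1|, |b_{j,1}−1|), and let f:ℝ→ℝ be Lipschitz with constant δ. Suppose for l∈{i,j} the functions x_{l,1}, x_{l,2}, x_{l,3}:[0,∞)→ℝ are differentiable and satisfy ẋ_{l,1} = −a₁x_{l,1} − f(x_{l,3}) + b_{l,1}u_l, ẋ_{l,2} = −a₂x_{l,2} + b₂x_{l,1}, ẋ_{l,3} = −a₃x_{l,3} + b₃x_{l,2}. Then for all t≥0, (1/2)·d/dt Σ_{q=1}^{3}(x_{i,q}−x_{j,q})² ≤ (−a₁+θ+θ₁/2+θ₂/2)·(x_{i,1}−x_{j,1})² + (x_{i,1}−x_{j,1})(u_i−u_j) + (b̃²/(2θ))·(u_i²+u_j²). -/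

import Mathlib

lemma amgm (α x y : ℝ) (hα : 0 < α) : x * y ≤ α / 2 * x ^ 2 + 1 / (2 * α) * y ^ 2 := by
  rw [← sub_nonneg]
  have h : 0 ≤ (α * x - y) ^ 2 / (2 * α) := by positivity
  have e : α / 2 * x ^ 2 + 1 / (2 * α) * y ^ 2 - x * y = (α * x - y) ^ 2 / (2 * α) := by
    field_simp; ring
  rw [e]; exact h

theorem stmt_18 (a1 a2 a3 b2 b3 δ θ θ3 : ℝ)
    (ha1 : 0 < a1) (ha2 : 0 < a2) (ha3 : 0 < a3) (hb2 : 0 < b2) (hb3 : 0 < b3)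
    (hδ : 0 < δ) (hθ : 0 < θ) (hθ3 : 0 < θ3)
    (h3 : b3 ^ 2 < 2 * a3 * θ3) (h2 : θ3 < 2 * a2)
    (bi1 bj1 : ℝ)
    (f : ℝ → ℝ) (hf : ∀ x y : ℝ, |f x - f y| ≤ δ * |x - y|)
    (xi1 xi2 xi3 xj1 xj2 xj3 ui uj : ℝ → ℝ)
    (hxi1 : ∀ t : ℝ, 0 ≤ t →
      HasDerivAt xi1 (-a1 * xi1 t - f (xi3 t) + bi1 * ui t) t)
    (hxi2 : ∀ t : ℝ, 0 ≤ t → HasDerivAt xi2 (-a2 * xi2 t + b2 * xi1 t) t)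
    (hxi3 : ∀ t : ℝ, 0 ≤ t → HasDerivAt xi3 (-a3 * xi3 t + b3 * xi2 t) t)
    (hxj1 : ∀ t : ℝ, 0 ≤ t →
      HasDerivAt xj1 (-a1 * xj1 t - f (xj3 t) + bj1 * uj t) t)
    (hxj2 : ∀ t : ℝ, 0 ≤ t → HasDerivAt xj2 (-a2 * xj2 t + b2 * xj1 t) t)
    (hxj3 : ∀ t : ℝ, 0 ≤ t → HasDerivAt xj3 (-a3 * xj3 t + b3 * xj2 t) t) :
    ∀ t : ℝ, 0 ≤ t →
      (1 / 2) * deriv (fun s =>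
          (xi1 s - xj1 s) ^ 2 + (xi2 s - xj2 s) ^ 2 + (xi3 s - xj3 s) ^ 2) t ≤
        (-a1 + θ + (δ ^ 2 * θ3 / (2 * a3 * θ3 - b3 ^ 2)) / 2
            + (b2 ^ 2 / (2 * a2 - θ3)) / 2) * (xi1 t - xj1 t) ^ 2
          + (xi1 t - xj1 t) * (ui t - uj t)
          + ((max |bi1 - 1| |bj1 - 1|) ^ 2 / (2 * θ)) * ((ui t) ^ 2 + (uj t) ^ 2) := by
  intro t ht
  set e1 := xi1 t - xj1 t with he1
  set e2 := xi2 t - xj2 t with he2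
  set e3 := xi3 t - xj3 t with he3
  set Δf := f (xi3 t) - f (xj3 t) with hΔf
  set d1 := (-a1 * xi1 t - f (xi3 t) + bi1 * ui t) - (-a1 * xj1 t - f (xj3 t) + bj1 * uj t) with hd1
  set d2 := (-a2 * xi2 t + b2 * xi1 t) - (-a2 * xj2 t + b2 * xj1 t) with hd2
  set d3 := (-a3 * xi3 t + b3 * xi2 t) - (-a3 * xj3 t + b3 * xj2 t) with hd3
  have hE1 : HasDerivAt (fun s => xi1 s - xj1 s) d1 t := (hxi1 t ht).sub (hxj1 t ht)
  have hE2 : HasDerivAt (fun s => xi2 s - xj2 s) d2 t := (hxi2 t ht).sub (hxj2 t ht)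
  have hE3 : HasDerivAt (fun s => xi3 s - xj3 s) d3 t := (hxi3 t ht).sub (hxj3 t ht)
  have hV : HasDerivAt (fun s =>
      (xi1 s - xj1 s) ^ 2 + (xi2 s - xj2 s) ^ 2 + (xi3 s - xj3 s) ^ 2)
      (2 * e1 * d1 + 2 * e2 * d2 + 2 * e3 * d3) t := by
    have h1 := hE1.fun_pow 2
    have h2 := hE2.fun_pow 2
    have h3 := hE3.fun_pow 2
    have := (h1.fun_add h2).fun_add h3
    refine this.congr_deriv ?_
    simp [he1, he2, he3]
  rw [hV.deriv]
  -- parameters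
  set c := 2 * a3 * θ3 - b3 ^ 2 with hc
  have hcpos : 0 < c := by simp [hc]; linarith
  set θ1 := δ ^ 2 * θ3 / c with hθ1
  set θ2 := b2 ^ 2 / (2 * a2 - θ3) with hθ2
  have h2a : 0 < 2 * a2 - θ3 := by linarith
  have hθ1pos : 0 < θ1 := by positivity
  have hθ2pos : 0 < θ2 := by positivity
  set bt := max |bi1 - 1| |bj1 - 1| with hbt
  have hbti : |bi1 - 1| ≤ bt := le_max_left _ _
  have hbtj : |bj1 - 1| ≤ bt := le_max_right _ _
  -- L1 : -e1 * Δf ≤ θ1/2 e1² + c/(2θ3) e3²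
  have L1 : -(e1 * Δf) ≤ θ1 / 2 * e1 ^ 2 + c / (2 * θ3) * e3 ^ 2 := by
    have h1 : -(e1 * Δf) ≤ |e1| * (δ * |e3|) := by
      calc -(e1 * Δf) ≤ |e1 * Δf| := neg_le_abs _
        _ = |e1| * |Δf| := abs_mul _ _
        _ ≤ |e1| * (δ * |e3|) := by
            exact mul_le_mul_of_nonneg_left (hf _ _) (abs_nonneg _)
    have h2 := amgm θ1 |e1| (δ * |e3|) hθ1pos
    have heq : 1 / (2 * θ1) * (δ * |e3|) ^ 2 = c / (2 * θ3) * e3 ^ 2 := by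
      rw [hθ1]
      rw [mul_pow, sq_abs]
      field_simp
    calc -(e1 * Δf) ≤ |e1| * (δ * |e3|) := h1
      _ ≤ θ1 / 2 * |e1| ^ 2 + 1 / (2 * θ1) * (δ * |e3|) ^ 2 := h2
      _ = θ1 / 2 * e1 ^ 2 + c / (2 * θ3) * e3 ^ 2 := by rw [sq_abs, heq]
  -- L2 : b3 e2 e3 ≤ θ3/2 e2² + b3²/(2θ3) e3²
  have L2 : b3 * e2 * e3 ≤ θ3 / 2 * e2 ^ 2 + b3 ^ 2 / (2 * θ3) * e3 ^ 2 := by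
    have h2 := amgm θ3 e2 (b3 * e3) hθ3
    have heq : 1 / (2 * θ3) * (b3 * e3) ^ 2 = b3 ^ 2 / (2 * θ3) * e3 ^ 2 := by
      field_simp
    calc b3 * e2 * e3 = e2 * (b3 * e3) := by ring
      _ ≤ θ3 / 2 * e2 ^ 2 + 1 / (2 * θ3) * (b3 * e3) ^ 2 := h2
      _ = _ := by rw [heq]
  -- L3 : b2 e1 e2 ≤ θ2/2 e1² + (a2 - θ3/2) e2²
  have L3 : b2 * e1 * e2 ≤ θ2 / 2 * e1 ^ 2 + (a2 - θ3 / 2) * e2 ^ 2 := by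
    have h2 := amgm θ2 e1 (b2 * e2) hθ2pos
    have heq : 1 / (2 * θ2) * (b2 * e2) ^ 2 = (a2 - θ3 / 2) * e2 ^ 2 := by
      rw [hθ2]; field_simp
    calc b2 * e1 * e2 = e1 * (b2 * e2) := by ring
      _ ≤ θ2 / 2 * e1 ^ 2 + 1 / (2 * θ2) * (b2 * e2) ^ 2 := h2
      _ = _ := by rw [heq]
  -- L4 : e1 * ((bi1-1) * ui t) ≤ θ/2 e1² + bt²/(2θ) ui²
  have L4 : e1 * ((bi1 - 1) * ui t) ≤ θ / 2 * e1 ^ 2 + bt ^ 2 / (2 * θ) * (ui t) ^ 2 := by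
    have h1 : e1 * ((bi1 - 1) * ui t) ≤ |e1| * (bt * |ui t|) := by
      calc e1 * ((bi1 - 1) * ui t) ≤ |e1 * ((bi1 - 1) * ui t)| := le_abs_self _
        _ = |e1| * (|bi1 - 1| * |ui t|) := by rw [abs_mul, abs_mul]
        _ ≤ |e1| * (bt * |ui t|) := by
            apply mul_le_mul_of_nonneg_left _ (abs_nonneg _)
            exact mul_le_mul_of_nonneg_right hbti (abs_nonneg _)
    have h2 := amgm θ |e1| (bt * |ui t|) hθ
    have heq : 1 / (2 * θ) * (bt * |ui t|) ^ 2 = bt ^ 2 / (2 * θ) * (ui t) ^ 2 := by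
      rw [mul_pow, sq_abs]; ring
    calc e1 * ((bi1 - 1) * ui t) ≤ |e1| * (bt * |ui t|) := h1
      _ ≤ θ / 2 * |e1| ^ 2 + 1 / (2 * θ) * (bt * |ui t|) ^ 2 := h2
      _ = _ := by rw [sq_abs, heq]
  have L5 : -(e1 * ((bj1 - 1) * uj t)) ≤ θ / 2 * e1 ^ 2 + bt ^ 2 / (2 * θ) * (uj t) ^ 2 := by
    have h1 : -(e1 * ((bj1 - 1) * uj t)) ≤ |e1| * (bt * |uj t|) := by
      calc -(e1 * ((bj1 - 1) * uj t)) ≤ |e1 * ((bj1 - 1) * uj t)| := neg_le_abs _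
        _ = |e1| * (|bj1 - 1| * |uj t|) := by rw [abs_mul, abs_mul]
        _ ≤ |e1| * (bt * |uj t|) := by
            apply mul_le_mul_of_nonneg_left _ (abs_nonneg _)
            exact mul_le_mul_of_nonneg_right hbtj (abs_nonneg _)
    have h2 := amgm θ |e1| (bt * |uj t|) hθ
    have heq : 1 / (2 * θ) * (bt * |uj t|) ^ 2 = bt ^ 2 / (2 * θ) * (uj t) ^ 2 := by
      rw [mul_pow, sq_abs]; ring
    calc -(e1 * ((bj1 - 1) * uj t)) ≤ |e1| * (bt * |uj t|) := h1
      _ ≤ θ / 2 * |e1| ^ 2 + 1 / (2 * θ) * (bt * |uj t|) ^ 2 := h2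
      _ = _ := by rw [sq_abs, heq]
  -- rewrite the derivative
  have hD : (1 / 2) * (2 * e1 * d1 + 2 * e2 * d2 + 2 * e3 * d3) =
      -a1 * e1 ^ 2 + (-(e1 * Δf)) + e1 * (ui t - uj t)
      + e1 * ((bi1 - 1) * ui t) + (-(e1 * ((bj1 - 1) * uj t)))
      - a2 * e2 ^ 2 + b2 * e1 * e2 - a3 * e3 ^ 2 + b3 * e2 * e3 := by
    rw [hd1, hd2, hd3, he1, he2, he3, hΔf]; ring
  rw [hD]
  have goal_eq : (-a1 + θ + θ1 / 2 + θ2 / 2) * e1 ^ 2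
      + e1 * (ui t - uj t) + bt ^ 2 / (2 * θ) * ((ui t) ^ 2 + (uj t) ^ 2) =
      -a1 * e1 ^ 2 + (θ1 / 2 * e1 ^ 2 + c / (2 * θ3) * e3 ^ 2) + e1 * (ui t - uj t)
      + (θ / 2 * e1 ^ 2 + bt ^ 2 / (2 * θ) * (ui t) ^ 2)
      + (θ / 2 * e1 ^ 2 + bt ^ 2 / (2 * θ) * (uj t) ^ 2)
      - a2 * e2 ^ 2 + (θ2 / 2 * e1 ^ 2 + (a2 - θ3 / 2) * e2 ^ 2)
      - a3 * e3 ^ 2 + (θ3 / 2 * e2 ^ 2 + b3 ^ 2 / (2 * θ3) * e3 ^ 2) := by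
    rw [hc]
    field_simp
    ring
  calc -a1 * e1 ^ 2 + (-(e1 * Δf)) + e1 * (ui t - uj t)
      + e1 * ((bi1 - 1) * ui t) + (-(e1 * ((bj1 - 1) * uj t)))
      - a2 * e2 ^ 2 + b2 * e1 * e2 - a3 * e3 ^ 2 + b3 * e2 * e3
      ≤ -a1 * e1 ^ 2 + (θ1 / 2 * e1 ^ 2 + c / (2 * θ3) * e3 ^ 2) + e1 * (ui t - uj t)
      + (θ / 2 * e1 ^ 2 + bt ^ 2 / (2 * θ) * (ui t) ^ 2)
      + (θ / 2 * e1 ^ 2 + bt ^ 2 / (2 * θ) * (uj t) ^ 2)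
      - a2 * e2 ^ 2 + (θ2 / 2 * e1 ^ 2 + (a2 - θ3 / 2) * e2 ^ 2)
      - a3 * e3 ^ 2 + (θ3 / 2 * e2 ^ 2 + b3 ^ 2 / (2 * θ3) * e3 ^ 2) := by
        linarith [L1, L2, L3, L4, L5]
    _ = (-a1 + θ + θ1 / 2 + θ2 / 2) * e1 ^ 2
      + e1 * (ui t - uj t) + bt ^ 2 / (2 * θ) * ((ui t) ^ 2 + (uj t) ^ 2) := goal_eq.symm
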